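/- Write Z ∈ ℝ^n near infinity in polar-type coordinates x = 1/|Z|, y = angular coordinates, and let (ξ, η) be the fiber coordinates defined by writing a covector as ξ dx/x³ + η·dy/x. Suppose Z lies in the region where Z_1 dominates, with x = 1/|Z|, y_j = Z_j/|Z| (2 ≤ j ≤ n). Then for the 1-form (2tζ − z)·dζ restricted to { ζ = Z } (so dζ = dZ in the above coordinates) with z = z_0^⊥ + 2s̃ Ẑ, t = t_0 + s̃/|Z|, z_0^⊥ ⊥ Z, one has ξ = −2t_0 + O(x) and η_j = −(z_0')_j − ((z_0'·y) y_j)/(1 − |y|²), where z_0' = ((z_0^⊥)_2, ..., (z_0^⊥)_n). In particular the map (z_0', t_0) ↦ (ξ, η) is invertible for |y| small. -/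

import Mathlib

set_option maxHeartbeats 1000000

open scoped RealInnerProductSpace

noncomputable section

/-- First component `ζ₁ = √(1-|y|²)/x` of `ζ` in the coordinates `x = 1/|ζ|`,
`y = angular coordinates` (region where `ζ₁` dominates). -/
def zeta1 {m : ℕ} (p : ℝ × EuclideanSpace ℝ (Fin m)) : ℝ :=
  Real.sqrt (1 - ‖p.2‖ ^ 2) / p.1

/-- Remaining components `ζ' = y/x` of `ζ`. -/
def zetaRest {m : ℕ} (p : ℝ × EuclideanSpace ℝ (Fin m)) : EuclideanSpace ℝ (Fin m) :=
  p.1⁻¹ • p.2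

/-- The 1-form `(2tζ - z)·dζ = (2t₀ζ - z₀^⊥)·dζ` pulled back to the `(x,y)` coordinates,
where `z₀^⊥ ⊥ ζ` has components `(z₀^⊥)₁ = -⟪z₀', y⟫/√(1-|y|²)` and `z₀'`. -/
def oneForm {m : ℕ} (t₀ : ℝ) (z' : EuclideanSpace ℝ (Fin m))
    (p u : ℝ × EuclideanSpace ℝ (Fin m)) : ℝ :=
  (2 * t₀ * zeta1 p + ⟪z', p.2⟫ / Real.sqrt (1 - ‖p.2‖ ^ 2)) * fderiv ℝ zeta1 p u
    + ⟪(2 * t₀) • zetaRest p - z', fderiv ℝ (zetaRest (m := m)) p u⟫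

/-- Derivative of `zeta1` applied to a tangent vector `u`. -/
lemma fderiv_zeta1_apply {m : ℕ} {x : ℝ} {y : EuclideanSpace ℝ (Fin m)} (hx : x ≠ 0)
    (hy : ‖y‖ < 1) (u : ℝ × EuclideanSpace ℝ (Fin m)) :
    fderiv ℝ (zeta1 (m := m)) (x, y) u
      = -(Real.sqrt (1 - ‖y‖ ^ 2) / x ^ 2) * u.1
        - ⟪y, u.2⟫ / (Real.sqrt (1 - ‖y‖ ^ 2) * x) := by
  have h0 : (0 : ℝ) < 1 - ‖y‖ ^ 2 := by nlinarith [norm_nonneg y]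
  have hs : Real.sqrt (1 - ‖y‖ ^ 2) ≠ 0 := by positivity
  have hsq := HasFDerivAt.norm_sq
    (hasFDerivAt_snd (𝕜 := ℝ) (p := ((x, y) : ℝ × EuclideanSpace ℝ (Fin m))))
  have h1 := ((hasFDerivAt_const (1 : ℝ)
      ((x, y) : ℝ × EuclideanSpace ℝ (Fin m))).sub hsq).sqrt (by simpa using h0.ne')
  have h2 := (hasDerivAt_inv hx).comp_hasFDerivAt ((x, y) : ℝ × EuclideanSpace ℝ (Fin m))
    (hasFDerivAt_fst (𝕜 := ℝ))
  have h3 := h1.mul h2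
  have hz := h3.congr_of_eventuallyEq (Filter.Eventually.of_forall
    (fun p => by simp [zeta1, div_eq_mul_inv]) :
    (zeta1 (m := m)) =ᶠ[nhds ((x, y) : ℝ × EuclideanSpace ℝ (Fin m))] _)
  rw [hz.fderiv]
  simp only [ContinuousLinearMap.add_apply, ContinuousLinearMap.smul_apply,
    ContinuousLinearMap.coe_smul', Pi.smul_apply, ContinuousLinearMap.coe_comp',
    Function.comp_apply, ContinuousLinearMap.coe_fst', ContinuousLinearMap.coe_snd',
    ContinuousLinearMap.smulRight_apply, ContinuousLinearMap.one_apply,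
    innerSL_apply_apply, smul_eq_mul, ContinuousLinearMap.zero_apply, zero_sub, nsmul_eq_mul]
  simp only [ContinuousLinearMap.neg_apply, ContinuousLinearMap.smul_apply,
    ContinuousLinearMap.coe_comp', Function.comp_apply, ContinuousLinearMap.coe_snd',
    innerSL_apply_apply, smul_eq_mul, nsmul_eq_mul, Nat.cast_ofNat, Pi.sub_apply]
  field_simp
  ring

/-- Derivative of `zetaRest` applied to a tangent vector `u`. -/
lemma fderiv_zetaRest_apply {m : ℕ} {x : ℝ} {y : EuclideanSpace ℝ (Fin m)} (hx : x ≠ 0)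
    (u : ℝ × EuclideanSpace ℝ (Fin m)) :
    fderiv ℝ (zetaRest (m := m)) (x, y) u
      = x⁻¹ • u.2 + (-(x ^ 2)⁻¹ * u.1) • y := by
  have h2 := (hasDerivAt_inv hx).comp_hasFDerivAt ((x, y) : ℝ × EuclideanSpace ℝ (Fin m))
    (hasFDerivAt_fst (𝕜 := ℝ))
  have h3 := h2.smul (hasFDerivAt_snd (𝕜 := ℝ) (p := ((x, y) : ℝ × EuclideanSpace ℝ (Fin m))))
  have hz := h3.congr_of_eventuallyEq (Filter.Eventually.of_forall
    (fun p => by simp [zetaRest]) :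
    (zetaRest (m := m)) =ᶠ[nhds ((x, y) : ℝ × EuclideanSpace ℝ (Fin m))] _)
  rw [hz.fderiv]
  simp only [ContinuousLinearMap.add_apply, ContinuousLinearMap.smul_apply,
    ContinuousLinearMap.coe_snd', ContinuousLinearMap.smulRight_apply,
    ContinuousLinearMap.coe_fst', Function.comp_apply, smul_eq_mul,
    ContinuousLinearMap.coe_smul', Pi.smul_apply]

/-- in the 1-cusp frame `dx/x³`, `dy/x` near `|Z| = ∞`, the coefficients of
the 1-form `(2tζ - z)·dζ` along the bicharacteristic with data `(t₀, z₀^⊥)` are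
`ξ = -2t₀ + O(x)` and `η_j = -(z₀')_j - (z₀'·y) y_j/(1 - |y|²)`; and for `|y|` small the
map `(z₀', t₀) ↦ (ξ, η)` is invertible. -/
theorem stmt11 (m : ℕ) (t₀ : ℝ) (z' : EuclideanSpace ℝ (Fin m)) :
    (∃ C : ℝ, ∀ x ∈ Set.Ioc (0 : ℝ) 1, ∀ y : EuclideanSpace ℝ (Fin m), ‖y‖ ≤ 1 / 2 →
      |x ^ 3 * oneForm t₀ z' (x, y) (1, 0) - (-2 * t₀)| ≤ C * x) ∧
    (∀ x ∈ Set.Ioc (0 : ℝ) 1, ∀ y : EuclideanSpace ℝ (Fin m), ‖y‖ ≤ 1 / 2 → ∀ j : Fin m,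
      x * oneForm t₀ z' (x, y) (0, EuclideanSpace.single j (1 : ℝ))
        = -(z' j) - ⟪z', y⟫ * y j / (1 - ‖y‖ ^ 2)) ∧
    (∀ y : EuclideanSpace ℝ (Fin m), ‖y‖ ≤ 1 / 2 →
      Function.Bijective (fun q : EuclideanSpace ℝ (Fin m) × ℝ =>
        ((-2 * q.2 : ℝ), -q.1 - (⟪q.1, y⟫ / (1 - ‖y‖ ^ 2)) • y))) := by
  refine ⟨⟨0, ?_⟩, ?_, ?_⟩
  · -- the `dx/x³` coefficient is exactly `-2t₀`
    intro x hx y hy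
    have hx0 : x ≠ 0 := ne_of_gt hx.1
    have hy1 : ‖y‖ < 1 := lt_of_le_of_lt hy (by norm_num)
    have h0 : (0 : ℝ) < 1 - ‖y‖ ^ 2 := by nlinarith [norm_nonneg y]
    have hs : Real.sqrt (1 - ‖y‖ ^ 2) ≠ 0 := by positivity
    have hss : Real.sqrt (1 - ‖y‖ ^ 2) * Real.sqrt (1 - ‖y‖ ^ 2) = 1 - ‖y‖ ^ 2 :=
      Real.mul_self_sqrt h0.le
    have key : x ^ 3 * oneForm t₀ z' (x, y) (1, 0) = -2 * t₀ := by
      rw [oneForm, fderiv_zeta1_apply hx0 hy1, fderiv_zetaRest_apply hx0]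
      simp only [zeta1, zetaRest, inner_zero_right, smul_zero, zero_add, zero_div,
        inner_sub_left, real_inner_smul_left, real_inner_smul_right,
        real_inner_self_eq_norm_sq, mul_one, sub_zero]
      field_simp
      linear_combination (-2 * t₀) * hss
    rw [key]
    simp
  · -- the `dy_j/x` coefficient
    intro x hx y hy j
    have hx0 : x ≠ 0 := ne_of_gt hx.1
    have hy1 : ‖y‖ < 1 := lt_of_le_of_lt hy (by norm_num)
    have h0 : (0 : ℝ) < 1 - ‖y‖ ^ 2 := by nlinarith [norm_nonneg y]
    have hs : Real.sqrt (1 - ‖y‖ ^ 2) ≠ 0 := by positivity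
    have hss : Real.sqrt (1 - ‖y‖ ^ 2) * Real.sqrt (1 - ‖y‖ ^ 2) = 1 - ‖y‖ ^ 2 :=
      Real.mul_self_sqrt h0.le
    rw [oneForm, fderiv_zeta1_apply hx0 hy1, fderiv_zetaRest_apply hx0]
    simp only [zeta1, zetaRest, mul_zero, zero_mul, neg_zero, zero_smul, add_zero, zero_sub,
      inner_sub_left, real_inner_smul_left, real_inner_smul_right, smul_smul,
      real_inner_self_eq_norm_sq, EuclideanSpace.inner_single_right, RCLike.inner_apply,
      starRingEnd_apply, star_trivial, mul_one]
    field_simp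
    have hA' : x * ((2 * t₀ / x) • y) j = 2 * t₀ * y j := by
      rw [PiLp.smul_apply, smul_eq_mul]
      field_simp
    linear_combination (x * ⟪z', y⟫ * y j) * hss
      + (Real.sqrt (1 - ‖y‖ ^ 2) ^ 2 * (1 - ‖y‖ ^ 2)) * hA'
  · -- invertibility of `(z₀', t₀) ↦ (ξ, η)`
    intro y hy
    have hy1 : ‖y‖ < 1 := lt_of_le_of_lt hy (by norm_num)
    have h0 : (0 : ℝ) < 1 - ‖y‖ ^ 2 := by nlinarith [norm_nonneg y]
    refine Function.bijective_iff_has_inverse.mpr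
      ⟨fun a => (-a.2 + ⟪a.2, y⟫ • y, -a.1 / 2), fun q => ?_, fun a => ?_⟩
    · refine Prod.ext ?_ (by simp)
      show -(-q.1 - (⟪q.1, y⟫ / (1 - ‖y‖ ^ 2)) • y)
          + ⟪-q.1 - (⟪q.1, y⟫ / (1 - ‖y‖ ^ 2)) • y, y⟫ • y = q.1
      simp only [inner_sub_left, inner_neg_left, real_inner_smul_left,
        real_inner_self_eq_norm_sq]
      match_scalars
      · ring
      · field_simp
        ring
    · refine Prod.ext (by simp; ring) ?_
      show -(-a.2 + ⟪a.2, y⟫ • y) - (⟪-a.2 + ⟪a.2, y⟫ • y, y⟫ / (1 - ‖y‖ ^ 2)) • y = a.2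
      simp only [inner_add_left, inner_neg_left, real_inner_smul_left,
        real_inner_self_eq_norm_sq]
      match_scalars
      · ring
      · field_simp
        ring
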